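/- Let C and D be categories and F : C → D a functor. If C has the amalgamation property and F is essentially surjective on objects and absorbing, then D has the amalgamation property. Moreover, if A is an amalgamation base in C and F is absorbing, then F(A) is an amalgamation base in D. -/
import Mathlib


open CategoryTheory

universe v₁ v₂ u₁ u₂

/-- An object `A` is an amalgamation base if every span with vertex `A`
can be completed to a commutative square. -/
def IsAmalgamationBase {C : Type u₁} [Category.{v₁} C] (A : C) : Prop :=
  ∀ ⦃B X : C⦄ (α₁ : A ⟶ B) (α₂ : A ⟶ X),
    ∃ (W : C) (β₁ : B ⟶ W) (β₂ : X ⟶ W), α₁ ≫ β₁ = α₂ ≫ β₂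

/-- A functor `F : C ⥤ D` is absorbing if every `D`-morphism out of `F(X)` can be
absorbed back: there are `f' : X ⟶ Y'` in `C` and `g : Y ⟶ F(Y')` with `F(f') = f ≫ g`. -/
def Absorbing {C : Type u₁} [Category.{v₁} C] {D : Type u₂} [Category.{v₂} D]
    (F : C ⥤ D) : Prop :=
  ∀ (X : C) (Y : D) (f : F.obj X ⟶ Y),
    ∃ (Y' : C) (f' : X ⟶ Y') (g : Y ⟶ F.obj Y'), F.map f' = f ≫ g

/-- If `C` has the amalgamation property and `F` is essentially surjective on objects
and absorbing, then `D` has the amalgamation property; moreover an absorbing functor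
maps amalgamation bases to amalgamation bases. -/
theorem stmt0 {C : Type u₁} [Category.{v₁} C] {D : Type u₂} [Category.{v₂} D]
    (F : C ⥤ D) (habs : Absorbing F) :
    ((∀ A : C, IsAmalgamationBase A) →
      (∀ Y : D, ∃ X : C, Nonempty (F.obj X ≅ Y)) →
      (∀ A : D, IsAmalgamationBase A)) ∧
    (∀ A : C, IsAmalgamationBase A → IsAmalgamationBase (F.obj A)) := by
  have key : ∀ A : C, IsAmalgamationBase A → IsAmalgamationBase (F.obj A) := by
    intro A hA B X α₁ α₂
    obtain ⟨B', f₁, g₁, h₁⟩ := habs A B α₁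
    obtain ⟨X', f₂, g₂, h₂⟩ := habs A X α₂
    obtain ⟨W, β₁, β₂, hc⟩ := hA f₁ f₂
    refine ⟨F.obj W, g₁ ≫ F.map β₁, g₂ ≫ F.map β₂, ?_⟩
    rw [← Category.assoc, ← Category.assoc, ← h₁, ← h₂, ← F.map_comp, ← F.map_comp, hc]
  refine ⟨?_, key⟩
  intro hC hess A B X α₁ α₂
  obtain ⟨A', ⟨e⟩⟩ := hess A
  obtain ⟨W, β₁, β₂, hc⟩ := key A' (hC A') (e.hom ≫ α₁) (e.hom ≫ α₂)
  refine ⟨W, β₁, β₂, ?_⟩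
  simpa using hc
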